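/- arXiv:1201.6477 — 2 statements merged into one kernel-verified Lean document; each statement's English description precedes it below -/
import Mathlib

section
/- The function f(x) = (2x/sin x + x/tan x − 3)/(x³·sin x) is strictly increasing on (0, π/2). -/
open Real


/-- If `f 0 = 0` and `f` has nonnegative derivative `f'` on `[0, ∞)`, then `f x ≥ 0` for `x ≥ 0`. -/
lemma nonneg_of_deriv_nonneg (f f' : ℝ → ℝ) (hd : ∀ t, HasDerivAt f (f' t) t)
    (h0 : f 0 = 0) (hpos : ∀ t, 0 ≤ t → 0 ≤ f' t) {x : ℝ} (hx : 0 ≤ x) : 0 ≤ f x := by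
  have hmono : MonotoneOn f (Set.Ici (0:ℝ)) := by
    apply monotoneOn_of_deriv_nonneg (convex_Ici 0)
    · exact fun t _ => (hd t).continuousAt.continuousWithinAt
    · exact fun t _ => ((hd t).differentiableAt).differentiableWithinAt
    · intro t ht
      rw [interior_Ici] at ht
      rw [(hd t).deriv]
      exact hpos t (le_of_lt ht)
  have := hmono (Set.self_mem_Ici) (Set.mem_Ici.2 hx) hx
  rwa [h0] at this

lemma sin_ge3 {x : ℝ} (hx : 0 ≤ x) : x - x^3/6 ≤ Real.sin x := by
  have h := nonneg_of_deriv_nonneg (fun t => Real.sin t - (t - t^3/6))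
      (fun t => Real.cos t - (1 - (3:ℕ)*t^(3-1)/6)) (fun t => by
        exact (Real.hasDerivAt_sin t).sub ((hasDerivAt_id t).sub ((hasDerivAt_pow 3 t).div_const 6)))
      (by norm_num) (fun t _ => by
        have := Real.one_sub_sq_div_two_le_cos (x := t)
        push_cast
        nlinarith) hx
  simpa using h

lemma cos_le4 {x : ℝ} (hx : 0 ≤ x) : Real.cos x ≤ 1 - x^2/2 + x^4/24 := by
  have h := nonneg_of_deriv_nonneg (fun t => 1 - t^2/2 + t^4/24 - Real.cos t)
      (fun t => -(2*t^(2-1))/2 + (4:ℕ)*t^(4-1)/24 + Real.sin t) (fun t => by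
        have : HasDerivAt (fun t : ℝ => 1 - t^2/2 + t^4/24 - Real.cos t)
            (0 - ((2:ℕ)*t^(2-1))/2 + ((4:ℕ)*t^(4-1))/24 - (-Real.sin t)) t :=
          (((hasDerivAt_const t (1:ℝ)).sub ((hasDerivAt_pow 2 t).div_const 2)).add
            ((hasDerivAt_pow 4 t).div_const 24)).sub (Real.hasDerivAt_cos t)
        convert this using 1
        push_cast
        ring)
      (by norm_num) (fun t ht => by nlinarith [sin_ge3 ht]) hx
  linarith [h]

lemma sin_le5 {x : ℝ} (hx : 0 ≤ x) : Real.sin x ≤ x - x^3/6 + x^5/120 := by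
  have h := nonneg_of_deriv_nonneg (fun t => t - t^3/6 + t^5/120 - Real.sin t)
      (fun t => 1 - (3:ℕ)*t^(3-1)/6 + (5:ℕ)*t^(5-1)/120 - Real.cos t) (fun t => by
        exact (((hasDerivAt_id t).sub ((hasDerivAt_pow 3 t).div_const 6)).add
          ((hasDerivAt_pow 5 t).div_const 120)).sub (Real.hasDerivAt_sin t))
      (by norm_num) (fun t ht => by
        have := cos_le4 ht
        push_cast
        nlinarith) hx
  linarith [h]

lemma cos_ge6 {x : ℝ} (hx : 0 ≤ x) : 1 - x^2/2 + x^4/24 - x^6/720 ≤ Real.cos x := by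
  have h := nonneg_of_deriv_nonneg
      (fun t => Real.cos t - (1 - t^2/2 + t^4/24 - t^6/720))
      (fun t => -Real.sin t - (-(2:ℕ)*t^(2-1)/2 + (4:ℕ)*t^(4-1)/24 - (6:ℕ)*t^(6-1)/720))
      (fun t => by
        have : HasDerivAt (fun t : ℝ => Real.cos t - (1 - t^2/2 + t^4/24 - t^6/720))
            (-Real.sin t - (0 - ((2:ℕ)*t^(2-1))/2 + ((4:ℕ)*t^(4-1))/24 - ((6:ℕ)*t^(6-1))/720)) t :=
          (Real.hasDerivAt_cos t).sub ((((hasDerivAt_const t (1:ℝ)).sub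
            ((hasDerivAt_pow 2 t).div_const 2)).add ((hasDerivAt_pow 4 t).div_const 24)).sub
            ((hasDerivAt_pow 6 t).div_const 720))
        convert this using 1
        push_cast
        ring)
      (by norm_num) (fun t ht => by
        have := sin_le5 ht
        push_cast
        nlinarith) hx
  linarith [h]

lemma sin_ge7 {x : ℝ} (hx : 0 ≤ x) : x - x^3/6 + x^5/120 - x^7/5040 ≤ Real.sin x := by
  have h := nonneg_of_deriv_nonneg
      (fun t => Real.sin t - (t - t^3/6 + t^5/120 - t^7/5040))
      (fun t => Real.cos t - (1 - (3:ℕ)*t^(3-1)/6 + (5:ℕ)*t^(5-1)/120 - (7:ℕ)*t^(7-1)/5040))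
      (fun t => by
        exact (Real.hasDerivAt_sin t).sub ((((hasDerivAt_id t).sub
          ((hasDerivAt_pow 3 t).div_const 6)).add ((hasDerivAt_pow 5 t).div_const 120)).sub
          ((hasDerivAt_pow 7 t).div_const 5040)))
      (by norm_num) (fun t ht => by
        have := cos_ge6 ht
        push_cast
        nlinarith) hx
  linarith [h]

lemma cos_le8 {x : ℝ} (hx : 0 ≤ x) :
    Real.cos x ≤ 1 - x^2/2 + x^4/24 - x^6/720 + x^8/40320 := by
  have h := nonneg_of_deriv_nonneg
      (fun t => 1 - t^2/2 + t^4/24 - t^6/720 + t^8/40320 - Real.cos t)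
      (fun t => -(2:ℕ)*t^(2-1)/2 + (4:ℕ)*t^(4-1)/24 - (6:ℕ)*t^(6-1)/720 + (8:ℕ)*t^(8-1)/40320
        + Real.sin t)
      (fun t => by
        have : HasDerivAt
            (fun t : ℝ => 1 - t^2/2 + t^4/24 - t^6/720 + t^8/40320 - Real.cos t)
            (0 - ((2:ℕ)*t^(2-1))/2 + ((4:ℕ)*t^(4-1))/24 - ((6:ℕ)*t^(6-1))/720
              + ((8:ℕ)*t^(8-1))/40320 - (-Real.sin t)) t :=
          (((((hasDerivAt_const t (1:ℝ)).sub ((hasDerivAt_pow 2 t).div_const 2)).add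
            ((hasDerivAt_pow 4 t).div_const 24)).sub ((hasDerivAt_pow 6 t).div_const 720)).add
            ((hasDerivAt_pow 8 t).div_const 40320)).sub (Real.hasDerivAt_cos t)
        convert this using 1
        push_cast
        ring)
      (by norm_num) (fun t ht => by
        have := sin_ge7 ht
        push_cast
        nlinarith) hx
  linarith [h]

lemma sin_le9 {x : ℝ} (hx : 0 ≤ x) :
    Real.sin x ≤ x - x^3/6 + x^5/120 - x^7/5040 + x^9/362880 := by
  have h := nonneg_of_deriv_nonneg
      (fun t => t - t^3/6 + t^5/120 - t^7/5040 + t^9/362880 - Real.sin t)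
      (fun t => 1 - (3:ℕ)*t^(3-1)/6 + (5:ℕ)*t^(5-1)/120 - (7:ℕ)*t^(7-1)/5040
        + (9:ℕ)*t^(9-1)/362880 - Real.cos t)
      (fun t => by
        exact ((((hasDerivAt_id t).sub ((hasDerivAt_pow 3 t).div_const 6)).add
          ((hasDerivAt_pow 5 t).div_const 120)).sub ((hasDerivAt_pow 7 t).div_const 5040)).add
          ((hasDerivAt_pow 9 t).div_const 362880) |>.sub (Real.hasDerivAt_sin t))
      (by norm_num) (fun t ht => by
        have := cos_le8 ht
        push_cast
        nlinarith) hx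
  linarith [h]

lemma cos_ge10 {x : ℝ} (hx : 0 ≤ x) :
    1 - x^2/2 + x^4/24 - x^6/720 + x^8/40320 - x^10/3628800 ≤ Real.cos x := by
  have h := nonneg_of_deriv_nonneg
      (fun t => Real.cos t - (1 - t^2/2 + t^4/24 - t^6/720 + t^8/40320 - t^10/3628800))
      (fun t => -Real.sin t - (-(2:ℕ)*t^(2-1)/2 + (4:ℕ)*t^(4-1)/24 - (6:ℕ)*t^(6-1)/720
        + (8:ℕ)*t^(8-1)/40320 - (10:ℕ)*t^(10-1)/3628800))
      (fun t => by
        have : HasDerivAt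
            (fun t : ℝ => Real.cos t - (1 - t^2/2 + t^4/24 - t^6/720 + t^8/40320 - t^10/3628800))
            (-Real.sin t - (0 - ((2:ℕ)*t^(2-1))/2 + ((4:ℕ)*t^(4-1))/24 - ((6:ℕ)*t^(6-1))/720
              + ((8:ℕ)*t^(8-1))/40320 - ((10:ℕ)*t^(10-1))/3628800)) t :=
          (Real.hasDerivAt_cos t).sub ((((((hasDerivAt_const t (1:ℝ)).sub
            ((hasDerivAt_pow 2 t).div_const 2)).add ((hasDerivAt_pow 4 t).div_const 24)).sub
            ((hasDerivAt_pow 6 t).div_const 720)).add ((hasDerivAt_pow 8 t).div_const 40320)).sub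
            ((hasDerivAt_pow 10 t).div_const 3628800))
        convert this using 1
        push_cast
        ring)
      (by norm_num) (fun t ht => by
        have := sin_le9 ht
        push_cast
        nlinarith) hx
  linarith [h]


lemma Ppos {x : ℝ} (hx : 0 < x) (hx2 : x ≤ 1.5708) :
    0 < x^10/105 - 353/259200*x^12 + 13/151200*x^14 - 293/101606400*x^16
      + 23/508032000*x^18 - x^20/12192768000 - x^22/131681894400 := by
  have h0 : (0:ℝ) ≤ x^2 := sq_nonneg x
  have ht : x^2 ≤ 2.468 := by nlinarith
  have hQ : 0 < 1/105 - 353/259200*(x^2) + 13/151200*(x^2)^2 - 293/101606400*(x^2)^3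
      + 23/508032000*(x^2)^4 - (x^2)^5/12192768000 - (x^2)^6/131681894400 := by
    have h3 : (x^2)^3 ≤ (2.468:ℝ)^3 := pow_le_pow_left₀ h0 ht 3
    have h5 : (x^2)^5 ≤ (2.468:ℝ)^5 := pow_le_pow_left₀ h0 ht 5
    have h6 : (x^2)^6 ≤ (2.468:ℝ)^6 := pow_le_pow_left₀ h0 ht 6
    nlinarith [pow_nonneg h0 2, pow_nonneg h0 4]
  calc (0:ℝ) < x^10 * (1/105 - 353/259200*(x^2) + 13/151200*(x^2)^2 - 293/101606400*(x^2)^3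
      + 23/508032000*(x^2)^4 - (x^2)^5/12192768000 - (x^2)^6/131681894400) :=
        mul_pos (pow_pos hx 10) hQ
    _ = x^10/105 - 353/259200*x^12 + 13/151200*x^14 - 293/101606400*x^16
      + 23/508032000*x^18 - x^20/12192768000 - x^22/131681894400 := by ring

set_option maxHeartbeats 1000000 in
lemma Wpos {x s c : ℝ} (hx : 0 < x) (hx2 : x ≤ 1.5708)
    (hs1 : x - x^3/6 + x^5/120 - x^7/5040 ≤ s)
    (hs2 : s ≤ x - x^3/6 + x^5/120 - x^7/5040 + x^9/362880)
    (hc1 : 1 - x^2/2 + x^4/24 - x^6/720 + x^8/40320 - x^10/3628800 ≤ c)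
    (hc2 : c ≤ 1 - x^2/2 + x^4/24 - x^6/720 + x^8/40320)
    (hs0 : 0 < s) (hc0 : 0 ≤ c) :
    0 < 9*x^2*s^2 - 4*x^3*s + x^3*s*c - x^4*s^2 - 4*x^4*c - 2*x^4*c^2 := by
  have h0 : (0:ℝ) ≤ x^2 := sq_nonneg x
  have ht : x^2 ≤ 2.468 := by nlinarith
  have hslo : 0 ≤ x - x^3/6 + x^5/120 - x^7/5040 := by
    have e1 : 0 ≤ x*(1 - x^2/6) := mul_nonneg hx.le (by nlinarith)
    have e2 : 0 ≤ x^5/120*(1 - x^2/42) := mul_nonneg (by positivity) (by nlinarith)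
    nlinarith [e1, e2]
  have hP := Ppos hx hx2
  have A1 : 0 ≤ 9*x^2*((s - (x - x^3/6 + x^5/120 - x^7/5040))*(s + (x - x^3/6 + x^5/120 - x^7/5040))) :=
    mul_nonneg (by positivity) (mul_nonneg (by linarith) (by linarith))
  have A2 : 0 ≤ 4*x^3*((x - x^3/6 + x^5/120 - x^7/5040 + x^9/362880) - s) :=
    mul_nonneg (by positivity) (by linarith)
  have A3a : 0 ≤ x^3*c*(s - (x - x^3/6 + x^5/120 - x^7/5040)) :=
    mul_nonneg (mul_nonneg (by positivity) hc0) (by linarith)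
  have A3b : 0 ≤ x^3*(x - x^3/6 + x^5/120 - x^7/5040)*
      (c - (1 - x^2/2 + x^4/24 - x^6/720 + x^8/40320 - x^10/3628800)) :=
    mul_nonneg (mul_nonneg (by positivity) hslo) (by linarith)
  have A4 : 0 ≤ x^4*(((x - x^3/6 + x^5/120 - x^7/5040 + x^9/362880) - s)*
      ((x - x^3/6 + x^5/120 - x^7/5040 + x^9/362880) + s)) :=
    mul_nonneg (by positivity) (mul_nonneg (by linarith) (by linarith))
  have A5 : 0 ≤ 4*x^4*((1 - x^2/2 + x^4/24 - x^6/720 + x^8/40320) - c) :=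
    mul_nonneg (by positivity) (by linarith)
  have A6 : 0 ≤ 2*x^4*(((1 - x^2/2 + x^4/24 - x^6/720 + x^8/40320) - c)*
      ((1 - x^2/2 + x^4/24 - x^6/720 + x^8/40320) + c)) :=
    mul_nonneg (by positivity) (mul_nonneg (by linarith) (by linarith))
  linarith [A1, A2, A3a, A3b, A4, A5, A6, hP]

theorem huygens_ratio_strictMono :
    StrictMonoOn
      (fun x : ℝ => (2 * x / Real.sin x + x / Real.tan x - 3) / (x ^ 3 * Real.sin x))
      (Set.Ioo 0 (π / 2)) := by
  have hpi : π ≤ 3.1416 := by linarith [Real.pi_lt_d6]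
  -- basic facts on the interval
  have hsin : ∀ x ∈ Set.Ioo (0:ℝ) (π/2), 0 < Real.sin x := fun x hx =>
    Real.sin_pos_of_pos_of_lt_pi hx.1 (lt_trans hx.2 (by linarith [Real.pi_pos]))
  have hcos : ∀ x ∈ Set.Ioo (0:ℝ) (π/2), 0 < Real.cos x := fun x hx =>
    Real.cos_pos_of_mem_Ioo ⟨by linarith [hx.1, Real.pi_pos], hx.2⟩
  -- the nicer form of the function
  set g : ℝ → ℝ := fun x => (2*x + x*Real.cos x - 3*Real.sin x) / (x^3 * Real.sin x ^ 2) with hg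
  have heq : Set.EqOn
      (fun x : ℝ => (2 * x / Real.sin x + x / Real.tan x - 3) / (x ^ 3 * Real.sin x)) g
      (Set.Ioo 0 (π/2)) := by
    intro x hx
    have hs := hsin x hx
    have hc := hcos x hx
    have hx0 : x ≠ 0 := ne_of_gt hx.1
    simp only [hg, Real.tan_eq_sin_div_cos]
    field_simp
  have hmono : StrictMonoOn g (Set.Ioo 0 (π/2)) := by
    apply strictMonoOn_of_deriv_pos (convex_Ioo _ _)
    · apply ContinuousOn.div
      · fun_prop
      · fun_prop
      · intro x hx
        have := hsin x hx
        have := hx.1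
        positivity
    · intro x hx
      rw [interior_Ioo] at hx
      have hs := hsin x hx
      have hc := hcos x hx
      have hx0 : 0 < x := hx.1
      have hDne : x^3 * Real.sin x ^ 2 ≠ 0 := by positivity
      have hN : HasDerivAt (fun y : ℝ => 2*y + y*Real.cos y - 3*Real.sin y)
          (2 + (1*Real.cos x + x*(-Real.sin x)) - 3*Real.cos x) x := by
        have h1 : HasDerivAt (fun y : ℝ => 2*y) 2 x := by
          simpa using (hasDerivAt_id x).const_mul (2:ℝ)
        exact (h1.add ((hasDerivAt_id x).mul (Real.hasDerivAt_cos x))).sub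
          ((Real.hasDerivAt_sin x).const_mul 3)
      have hD : HasDerivAt (fun y : ℝ => y^3 * Real.sin y ^ 2)
          ((3:ℕ)*x^(3-1) * Real.sin x ^ 2 + x^3 * ((2:ℕ) * Real.sin x ^ (2-1) * Real.cos x)) x :=
        (hasDerivAt_pow 3 x).mul ((Real.hasDerivAt_sin x).pow 2)
      have hdiv := hN.div hD hDne
      rw [hg]; erw [hdiv.deriv]
      apply div_pos
      · have hkey : (2 + (1*Real.cos x + x*(-Real.sin x)) - 3*Real.cos x) * (x^3 * Real.sin x ^ 2)
            - (2*x + x*Real.cos x - 3*Real.sin x) *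
              ((3:ℕ)*x^(3-1) * Real.sin x ^ 2 + x^3 * ((2:ℕ) * Real.sin x ^ (2-1) * Real.cos x))
            = Real.sin x * (9*x^2*(Real.sin x)^2 - 4*x^3*Real.sin x
              + x^3*Real.sin x*Real.cos x - x^4*(Real.sin x)^2 - 4*x^4*Real.cos x
              - 2*x^4*(Real.cos x)^2) := by
          push_cast
          ring
        rw [hkey]
        apply mul_pos hs
        have hx2 : x ≤ 1.5708 := by linarith [hx.2]
        exact Wpos hx0 hx2 (sin_ge7 hx0.le) (sin_le9 hx0.le) (cos_ge10 hx0.le)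
          (cos_le8 hx0.le) hs hc.le
      · positivity
  exact hmono.congr heq.symm |>.mono (le_refl _) |>.mono (le_refl _)
end

section
/- The function g(x) = (x/sin x + ((x/2)/tan(x/2))² − 2)/(x³·sin x) is increasing on (0, π/2), with limit 17/720 as x → 0⁺ and limit (π² + 8π − 32)/(2π³) as x → π/2⁻. -/
open Real Filter

open Real

private lemma nonneg_of_deriv {f f' : ℝ → ℝ} (hd : ∀ t, HasDerivAt f (f' t) t)
    (h0 : f 0 = 0) (hpos : ∀ t, 0 < t → 0 ≤ f' t) : ∀ t, 0 ≤ t → 0 ≤ f t := by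
  intro t ht
  have hmono : MonotoneOn f (Set.Ici (0:ℝ)) := by
    apply monotoneOn_of_deriv_nonneg (convex_Ici 0)
      (fun x _ => (hd x).continuousAt.continuousWithinAt)
      (fun x _ => ((hd x).differentiableAt).differentiableWithinAt)
    intro x hx
    rw [(hd x).deriv]
    exact hpos x (by simpa using hx)
  have := hmono (Set.self_mem_Ici) (by exact ht) ht
  simpa [h0] using this

lemma my_sin_ge (t : ℝ) (ht : 0 ≤ t) : t - t^3/6 ≤ Real.sin t := by
  have := nonneg_of_deriv (f := fun t => Real.sin t - (t - t^3/6))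
    (f' := fun t => Real.cos t - (1 - t^2/2)) ?_ (by norm_num) ?_ t ht
  · linarith
  · intro x
    have h1 := Real.hasDerivAt_sin x
    have h2 : HasDerivAt (fun t : ℝ => t - t^3/6) (1 - x^2/2) x := by
      have := ((hasDerivAt_id x).sub ((hasDerivAt_pow 3 x).div_const 6))
      convert this using 1
      all_goals try rfl
      ring
    exact h1.sub h2
  · intro x _
    have := Real.one_sub_sq_div_two_le_cos (x := x)
    linarith

lemma my_cos_le (t : ℝ) (ht : 0 ≤ t) : Real.cos t ≤ 1 - t^2/2 + t^4/24 := by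
  have := nonneg_of_deriv (f := fun t => 1 - t^2/2 + t^4/24 - Real.cos t)
    (f' := fun t => -(t - t^3/6) + Real.sin t) ?_ (by norm_num) ?_ t ht
  · linarith
  · intro x
    have h1 : HasDerivAt (fun t : ℝ => 1 - t^2/2 + t^4/24) (-(x - x^3/6)) x := by
      have := (((hasDerivAt_const x (1:ℝ)).sub ((hasDerivAt_pow 2 x).div_const 2)).add
        ((hasDerivAt_pow 4 x).div_const 24))
      convert this using 1
      all_goals try rfl
      push_cast
      ring
    have := h1.sub (Real.hasDerivAt_cos x)
    convert this using 1
    all_goals try rfl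
    ring
  · intro x hx
    have := my_sin_ge x hx.le
    linarith

lemma my_sin_le (t : ℝ) (ht : 0 ≤ t) : Real.sin t ≤ t - t^3/6 + t^5/120 := by
  have := nonneg_of_deriv (f := fun t => t - t^3/6 + t^5/120 - Real.sin t)
    (f' := fun t => (1 - t^2/2 + t^4/24) - Real.cos t) ?_ (by norm_num) ?_ t ht
  · linarith
  · intro x
    have h1 : HasDerivAt (fun t : ℝ => t - t^3/6 + t^5/120) (1 - x^2/2 + x^4/24) x := by
      have := (((hasDerivAt_id x).sub ((hasDerivAt_pow 3 x).div_const 6)).add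
        ((hasDerivAt_pow 5 x).div_const 120))
      convert this using 1
      all_goals try rfl
      push_cast
      ring
    exact h1.sub (Real.hasDerivAt_sin x)
  · intro x hx
    have := my_cos_le x hx.le
    linarith

lemma my_cos_ge (t : ℝ) (ht : 0 ≤ t) : 1 - t^2/2 + t^4/24 - t^6/720 ≤ Real.cos t := by
  have := nonneg_of_deriv (f := fun t => Real.cos t - (1 - t^2/2 + t^4/24 - t^6/720))
    (f' := fun t => (t - t^3/6 + t^5/120) - Real.sin t) ?_ (by norm_num) ?_ t ht
  · linarith
  · intro x
    have h1 : HasDerivAt (fun t : ℝ => 1 - t^2/2 + t^4/24 - t^6/720)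
        (-x + x^3/6 - x^5/120) x := by
      have := ((((hasDerivAt_const x (1:ℝ)).sub ((hasDerivAt_pow 2 x).div_const 2)).add
        ((hasDerivAt_pow 4 x).div_const 24)).sub ((hasDerivAt_pow 6 x).div_const 720))
      convert this using 1
      all_goals try rfl
      push_cast
      ring
    have := (Real.hasDerivAt_cos x).sub h1
    convert this using 1
    all_goals try rfl
    ring
  · intro x hx
    have := my_sin_le x hx.le
    linarith

lemma my_sin_ge' (t : ℝ) (ht : 0 ≤ t) : t - t^3/6 + t^5/120 - t^7/5040 ≤ Real.sin t := by
  have := nonneg_of_deriv (f := fun t => Real.sin t - (t - t^3/6 + t^5/120 - t^7/5040))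
    (f' := fun t => Real.cos t - (1 - t^2/2 + t^4/24 - t^6/720)) ?_ (by norm_num) ?_ t ht
  · linarith
  · intro x
    have h1 : HasDerivAt (fun t : ℝ => t - t^3/6 + t^5/120 - t^7/5040)
        (1 - x^2/2 + x^4/24 - x^6/720) x := by
      have := ((((hasDerivAt_id x).sub ((hasDerivAt_pow 3 x).div_const 6)).add
        ((hasDerivAt_pow 5 x).div_const 120)).sub ((hasDerivAt_pow 7 x).div_const 5040))
      convert this using 1
      all_goals try rfl
      push_cast
      ring
    exact (Real.hasDerivAt_sin x).sub h1
  · intro x hx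
    have := my_cos_ge x hx.le
    linarith

set_option maxHeartbeats 1000000 in
lemma Q_nonneg (t : ℝ) (ht : 0 < t) (ht2 : t ≤ 0.7854) :
    0 ≤ 6*(Real.sin t)^3*(Real.cos t)^3 - 4*t*(Real.sin t)^4*(Real.cos t)^2
      - t^2*(Real.sin t)*(Real.cos t)^5 - 4*t^2*(Real.sin t)*(Real.cos t)^3
      + 2*t^2*(Real.sin t)*(Real.cos t) - t^3*(Real.cos t)^4 - 2*t^3*(Real.cos t)^6 := by
  have hpi := Real.pi_gt_d6
  have hs0 : 0 < Real.sin t := Real.sin_pos_of_pos_of_lt_pi ht (by norm_num at ht2 ⊢; linarith)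
  have hc0 : 0 < Real.cos t := Real.cos_pos_of_mem_Ioo
    ⟨by norm_num at ht2 ⊢; linarith, by norm_num at ht2 ⊢; linarith⟩
  have hu : t^2 ≤ 0.6169 := by nlinarith
  have hu0 : (0:ℝ) ≤ t^2 := sq_nonneg t
  set s := Real.sin t with hsdef
  set c := Real.cos t with hcdef
  have hsl : t - t^3/6 + t^5/120 - t^7/5040 ≤ s := my_sin_ge' t ht.le
  have hsh : s ≤ t - t^3/6 + t^5/120 := my_sin_le t ht.le
  have hcl : 1 - t^2/2 + t^4/24 - t^6/720 ≤ c := my_cos_ge t ht.le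
  have hch : c ≤ 1 - t^2/2 + t^4/24 := my_cos_le t ht.le
  have hp3 : (t^2)^3 ≤ (0.6169:ℝ)^3 := pow_le_pow_left₀ hu0 hu 3
  have hq2 : (0:ℝ) ≤ (t^2)^2 := pow_nonneg hu0 2
  have hsl0 : 0 ≤ t - t^3/6 + t^5/120 - t^7/5040 := by nlinarith [mul_nonneg (mul_nonneg ht.le hu0) hu0]
  have hcl0 : 0 ≤ 1 - t^2/2 + t^4/24 - t^6/720 := by nlinarith
  have hsh0 : (0:ℝ) ≤ t - t^3/6 + t^5/120 := by nlinarith [mul_nonneg (mul_nonneg ht.le hu0) hu0]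
  have hch0 : (0:ℝ) ≤ 1 - t^2/2 + t^4/24 := le_trans hc0.le hch
  have m1 : (t - t^3/6 + t^5/120 - t^7/5040)^3 * (1 - t^2/2 + t^4/24 - t^6/720)^3 ≤ s^3*c^3 :=
    mul_le_mul (pow_le_pow_left₀ hsl0 hsl 3) (pow_le_pow_left₀ hcl0 hcl 3)
      (pow_nonneg hcl0 3) (pow_nonneg hs0.le 3)
  have m2 : s^4*c^2 ≤ (t - t^3/6 + t^5/120)^4 * (1 - t^2/2 + t^4/24)^2 :=
    mul_le_mul (pow_le_pow_left₀ hs0.le hsh 4) (pow_le_pow_left₀ hc0.le hch 2)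
      (pow_nonneg hc0.le 2) (pow_nonneg hsh0 4)
  have m3 : s*c^5 ≤ (t - t^3/6 + t^5/120) * (1 - t^2/2 + t^4/24)^5 :=
    mul_le_mul hsh (pow_le_pow_left₀ hc0.le hch 5) (pow_nonneg hc0.le 5) hsh0
  have m4 : s*c^3 ≤ (t - t^3/6 + t^5/120) * (1 - t^2/2 + t^4/24)^3 :=
    mul_le_mul hsh (pow_le_pow_left₀ hc0.le hch 3) (pow_nonneg hc0.le 3) hsh0
  have m5 : (t - t^3/6 + t^5/120 - t^7/5040) * (1 - t^2/2 + t^4/24 - t^6/720) ≤ s*c :=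
    mul_le_mul hsl hcl hcl0 hs0.le
  have m6 : c^4 ≤ (1 - t^2/2 + t^4/24)^4 := pow_le_pow_left₀ hc0.le hch 4
  have m7 : c^6 ≤ (1 - t^2/2 + t^4/24)^6 := pow_le_pow_left₀ hc0.le hch 6
  have e2 := mul_le_mul_of_nonneg_left m2 (by positivity : (0:ℝ) ≤ 4*t)
  have e3 := mul_le_mul_of_nonneg_left m3 (by positivity : (0:ℝ) ≤ t^2)
  have e4 := mul_le_mul_of_nonneg_left m4 (by positivity : (0:ℝ) ≤ 4*t^2)
  have e5 := mul_le_mul_of_nonneg_left m5 (by positivity : (0:ℝ) ≤ 2*t^2)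
  have e6 := mul_le_mul_of_nonneg_left m6 (by positivity : (0:ℝ) ≤ t^3)
  have e7 := mul_le_mul_of_nonneg_left m7 (by positivity : (0:ℝ) ≤ 2*t^3)
  have hB0 : (0:ℝ) ≤ (311/420) + (-289727/302400)*t^2 := by linarith
  have hB1 : (0:ℝ) ≤ (239053/453600) + (-2617133/15876000)*t^2 := by linarith
  have hB2 : (0:ℝ) ≤ (12375151/381024000) + (-424117/101606400)*t^2 := by linarith
  have hB3 : (0:ℝ) ≤ (111032893/320060160000) + (-5586107/320060160000)*t^2 := by nlinarith
  have hB4 : (0:ℝ) ≤ (15241/36578304000) + (5093509/1843546521600000)*t^2 + (-5123/12802406400000)*(t^2)^2 + (7201/737418608640000)*(t^2)^3 + (-911/4608866304000000)*(t^2)^4 + (13/4514807808000000)*(t^2)^5 + (-1/36870930432000000)*(t^2)^6 + (1/7964120973312000000)*(t^2)^7 := by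
    have p2 : (t^2)^2 ≤ (0.6169:ℝ)^2 := pow_le_pow_left₀ hu0 hu 2
    have p4 : (t^2)^4 ≤ (0.6169:ℝ)^4 := pow_le_pow_left₀ hu0 hu 4
    have p6 : (t^2)^6 ≤ (0.6169:ℝ)^6 := pow_le_pow_left₀ hu0 hu 6
    have n1 : (0:ℝ) ≤ t^2 := hu0
    have n3 : (0:ℝ) ≤ (t^2)^3 := pow_nonneg hu0 3
    have n5 : (0:ℝ) ≤ (t^2)^5 := pow_nonneg hu0 5
    have n7 : (0:ℝ) ≤ (t^2)^7 := pow_nonneg hu0 7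
    norm_num at p2 p4 p6 ⊢
    linarith
  have hM : (0:ℝ) ≤ ((311/420) + (-289727/302400)*t^2) + (t^2)^2*((239053/453600) + (-2617133/15876000)*t^2) + (t^2)^4*((12375151/381024000) + (-424117/101606400)*t^2) + (t^2)^6*((111032893/320060160000) + (-5586107/320060160000)*t^2) + (t^2)^8*((15241/36578304000) + (5093509/1843546521600000)*t^2 + (-5123/12802406400000)*(t^2)^2 + (7201/737418608640000)*(t^2)^3 + (-911/4608866304000000)*(t^2)^4 + (13/4514807808000000)*(t^2)^5 + (-1/36870930432000000)*(t^2)^6 + (1/7964120973312000000)*(t^2)^7) := by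
    have q1 := mul_nonneg (pow_nonneg hu0 2) hB1
    have q2 := mul_nonneg (pow_nonneg hu0 4) hB2
    have q3 := mul_nonneg (pow_nonneg hu0 6) hB3
    have q4 := mul_nonneg (pow_nonneg hu0 8) hB4
    linarith
  have hL : (0:ℝ) ≤ t^9 * (((311/420) + (-289727/302400)*t^2) + (t^2)^2*((239053/453600) + (-2617133/15876000)*t^2) + (t^2)^4*((12375151/381024000) + (-424117/101606400)*t^2) + (t^2)^6*((111032893/320060160000) + (-5586107/320060160000)*t^2) + (t^2)^8*((15241/36578304000) + (5093509/1843546521600000)*t^2 + (-5123/12802406400000)*(t^2)^2 + (7201/737418608640000)*(t^2)^3 + (-911/4608866304000000)*(t^2)^4 + (13/4514807808000000)*(t^2)^5 + (-1/36870930432000000)*(t^2)^6 + (1/7964120973312000000)*(t^2)^7)) := mul_nonneg (by positivity) hM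
  linarith [m1, e2, e3, e4, e5, e6, e7, hL]
section Mono
open Real Set

noncomputable def Gnum (x : ℝ) : ℝ :=
  (x/2)*Real.sin (x/2)*Real.cos (x/2) + (x/2)^2*Real.cos (x/2)^4
    - 2*Real.sin (x/2)^2*Real.cos (x/2)^2

noncomputable def Gden (x : ℝ) : ℝ := 16*(x/2)^3*Real.sin (x/2)^3*Real.cos (x/2)^3

noncomputable def GnumD (x : ℝ) : ℝ :=
  ((1/2)*Real.sin (x/2) + (x/2)*(Real.cos (x/2)*(1/2)))*Real.cos (x/2)
    + ((x/2)*Real.sin (x/2))*(-Real.sin (x/2)*(1/2))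
  + ((2*(x/2)*(1/2))*Real.cos (x/2)^4 + (x/2)^2*(4*Real.cos (x/2)^3*(-Real.sin (x/2)*(1/2))))
  - 2*((2*Real.sin (x/2)*(Real.cos (x/2)*(1/2)))*Real.cos (x/2)^2
      + Real.sin (x/2)^2*(2*Real.cos (x/2)*(-Real.sin (x/2)*(1/2))))

noncomputable def GdenD (x : ℝ) : ℝ :=
  16*((3*(x/2)^2*(1/2))*Real.sin (x/2)^3*Real.cos (x/2)^3
    + (x/2)^3*(3*Real.sin (x/2)^2*(Real.cos (x/2)*(1/2)))*Real.cos (x/2)^3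
    + (x/2)^3*Real.sin (x/2)^3*(3*Real.cos (x/2)^2*(-Real.sin (x/2)*(1/2))))

lemma hasDerivAt_Gnum (x : ℝ) : HasDerivAt Gnum (GnumD x) x := by
  have hid2 : HasDerivAt (fun y : ℝ => y/2) (1/2) x := (hasDerivAt_id x).div_const 2
  have hs : HasDerivAt (fun y : ℝ => Real.sin (y/2)) (Real.cos (x/2)*(1/2)) x :=
    (Real.hasDerivAt_sin (x/2)).comp (h₂ := Real.sin) x hid2
  have hc : HasDerivAt (fun y : ℝ => Real.cos (y/2)) (-Real.sin (x/2)*(1/2)) x :=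
    (Real.hasDerivAt_cos (x/2)).comp (h₂ := Real.cos) x hid2
  have h1 := (hid2.mul hs).mul hc
  have h2 := (hid2.pow 2).mul (hc.pow 4)
  have h3 := ((hs.pow 2).mul (hc.pow 2)).const_mul (2:ℝ)
  have h := (h1.add h2).sub h3
  convert h using 1
  all_goals try rfl
  · unfold Gnum; funext y; simp only [Pi.mul_apply, Pi.add_apply, Pi.sub_apply, Pi.pow_apply]; ring
  · unfold GnumD; push_cast; simp only [Pi.mul_apply, Pi.add_apply, Pi.sub_apply, Pi.pow_apply]; ring

lemma hasDerivAt_Gden (x : ℝ) : HasDerivAt Gden (GdenD x) x := by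
  have hid2 : HasDerivAt (fun y : ℝ => y/2) (1/2) x := (hasDerivAt_id x).div_const 2
  have hs : HasDerivAt (fun y : ℝ => Real.sin (y/2)) (Real.cos (x/2)*(1/2)) x :=
    (Real.hasDerivAt_sin (x/2)).comp (h₂ := Real.sin) x hid2
  have hc : HasDerivAt (fun y : ℝ => Real.cos (y/2)) (-Real.sin (x/2)*(1/2)) x :=
    (Real.hasDerivAt_cos (x/2)).comp (h₂ := Real.cos) x hid2
  have h := (((hid2.pow 3).mul (hs.pow 3)).mul (hc.pow 3)).const_mul (16:ℝ)
  convert h using 1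
  all_goals try rfl
  · unfold Gden; funext y; simp only [Pi.mul_apply, Pi.add_apply, Pi.sub_apply, Pi.pow_apply]; ring
  · unfold GdenD; push_cast; simp only [Pi.mul_apply, Pi.add_apply, Pi.sub_apply, Pi.pow_apply]; ring

lemma half_bounds {x : ℝ} (hx0 : 0 < x) (hx : x < π/2) :
    0 < Real.sin (x/2) ∧ 0 < Real.cos (x/2) ∧ x/2 ≤ 0.7854 := by
  have hpi := Real.pi_gt_d6
  have hpi2 := Real.pi_lt_d2
  refine ⟨Real.sin_pos_of_pos_of_lt_pi (by linarith) (by linarith),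
    Real.cos_pos_of_mem_Ioo ⟨by linarith, by linarith⟩, ?_⟩
  norm_num
  linarith [Real.pi_lt_d6]

lemma Gden_pos {x : ℝ} (hx0 : 0 < x) (hx : x < π/2) : 0 < Gden x := by
  obtain ⟨hs, hc, -⟩ := half_bounds hx0 hx
  unfold Gden
  positivity

lemma hasDerivAt_G {x : ℝ} (hx0 : 0 < x) (hx : x < π/2) :
    HasDerivAt (fun y => Gnum y / Gden y)
      ((GnumD x * Gden x - Gnum x * GdenD x) / (Gden x)^2) x :=
  (hasDerivAt_Gnum x).div (hasDerivAt_Gden x) (Gden_pos hx0 hx).ne'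

lemma derivG_nonneg {x : ℝ} (hx0 : 0 < x) (hx : x < π/2) :
    0 ≤ GnumD x * Gden x - Gnum x * GdenD x := by
  obtain ⟨hs, hc, ht⟩ := half_bounds hx0 hx
  have hQ := Q_nonneg (x/2) (by linarith) ht
  have hsc : Real.sin (x/2)^2 + Real.cos (x/2)^2 = 1 := Real.sin_sq_add_cos_sq (x/2)
  have key : GnumD x * Gden x - Gnum x * GdenD x
      = 8*((x/2)*Real.sin (x/2)*Real.cos (x/2))^2 *
        (6*(Real.sin (x/2))^3*(Real.cos (x/2))^3 - 4*(x/2)*(Real.sin (x/2))^4*(Real.cos (x/2))^2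
          - (x/2)^2*(Real.sin (x/2))*(Real.cos (x/2))^5
          - 4*(x/2)^2*(Real.sin (x/2))*(Real.cos (x/2))^3
          + 2*(x/2)^2*(Real.sin (x/2))*(Real.cos (x/2)) - (x/2)^3*(Real.cos (x/2))^4
          - 2*(x/2)^3*(Real.cos (x/2))^6) := by
    unfold GnumD Gden Gnum GdenD
    linear_combination (16*(x/2)^3*Real.sin (x/2)^4*Real.cos (x/2)^4
      + 16*(x/2)^4*Real.sin (x/2)^3*Real.cos (x/2)^3
      - 8*(x/2)^5*Real.sin (x/2)^2*Real.cos (x/2)^6) * hsc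
  rw [key]
  positivity
end Mono
open Real Set Filter

noncomputable def wg (x : ℝ) : ℝ :=
  (x / Real.sin x + ((x / 2) / Real.tan (x / 2)) ^ 2 - 2) / (x ^ 3 * Real.sin x)

lemma g_eq {x : ℝ} (hx0 : 0 < x) (hx : x < π/2) : wg x = Gnum x / Gden x := by
  obtain ⟨hs, hc, -⟩ := half_bounds hx0 hx
  have hsinx : Real.sin x = 2*Real.sin (x/2)*Real.cos (x/2) := by
    have := Real.sin_two_mul (x/2)
    rw [show 2*(x/2) = x by ring] at this
    exact this
  have hsx : 0 < Real.sin x := by rw [hsinx]; positivity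
  unfold wg Gnum Gden
  rw [hsinx, Real.tan_eq_sin_div_cos]
  field_simp
  ring

lemma wg_monotone : MonotoneOn wg (Set.Ioo 0 (π/2)) := by
  have hmono : MonotoneOn (fun y => Gnum y / Gden y) (Set.Ioo 0 (π/2)) := by
    apply monotoneOn_of_deriv_nonneg (convex_Ioo _ _)
    · intro x hx
      exact (hasDerivAt_G hx.1 hx.2).continuousAt.continuousWithinAt
    · intro x hx
      rw [interior_Ioo] at hx
      exact (hasDerivAt_G hx.1 hx.2).differentiableAt.differentiableWithinAt
    · intro x hx
      rw [interior_Ioo] at hx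
      rw [(hasDerivAt_G hx.1 hx.2).deriv]
      exact div_nonneg (derivG_nonneg hx.1 hx.2) (by positivity)
  exact hmono.congr fun x hx => (g_eq hx.1 hx.2).symm

noncomputable def lowf (x : ℝ) : ℝ :=
  ((17/45) - (116/315)*(x/2)^2 + (42443/302400)*(x/2)^4 - (4427/151200)*(x/2)^6 + (2803/725760)*(x/2)^8 - (89/259200)*(x/2)^10 + (7/331776)*(x/2)^12 - (167/186624000)*(x/2)^14 + (19/746496000)*(x/2)^16 - (1/2239488000)*(x/2)^18 + (1/268738560000)*(x/2)^20) / (16*(1 - (x/2)^2/6 + (x/2)^4/120)^3)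

noncomputable def highf (x : ℝ) : ℝ :=
  ((17/45) - (149/420)*(x/2)^2 + (5449/43200)*(x/2)^4 - (10247/453600)*(x/2)^6 + (1711/793800)*(x/2)^8 - (37693/381024000)*(x/2)^10 + (3439/3657830400)*(x/2)^12 + (31/457228800)*(x/2)^14 - (421/274337280000)*(x/2)^16 + (1/45722880000)*(x/2)^18 - (1/6584094720000)*(x/2)^20) / (16*(1 - (x/2)^2/6 + (x/2)^4/120 - (x/2)^6/5040)^3
    *(1 - (x/2)^2/2 + (x/2)^4/24 - (x/2)^6/720)^3)

set_option maxHeartbeats 1000000 in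
lemma wg_squeeze {x : ℝ} (hx0 : 0 < x) (hx1 : x < 1) : lowf x ≤ wg x ∧ wg x ≤ highf x := by
  have hpi : (3:ℝ) < π := Real.pi_gt_three
  have hxpi : x < π/2 := by linarith
  have hs : 0 < Real.sin (x/2) := (half_bounds hx0 hxpi).1
  have hc : 0 < Real.cos (x/2) := (half_bounds hx0 hxpi).2.1
  have hgden := Gden_pos hx0 hxpi
  rw [g_eq hx0 hxpi]
  have ht : 0 < x/2 := by linarith
  have ht2 : x/2 < 1/2 := by linarith
  set t := x/2 with htdef
  set s := Real.sin t with hsdef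
  set c := Real.cos t with hcdef
  have hsl : t - t^3/6 + t^5/120 - t^7/5040 ≤ s := my_sin_ge' t ht.le
  have hsh : s ≤ t - t^3/6 + t^5/120 := my_sin_le t ht.le
  have hcl : 1 - t^2/2 + t^4/24 - t^6/720 ≤ c := my_cos_ge t ht.le
  have hch : c ≤ 1 - t^2/2 + t^4/24 := my_cos_le t ht.le
  have hc1 : c ≤ 1 := Real.cos_le_one t
  have hu : t^2 ≤ 1/4 := by nlinarith
  have hu0 : (0:ℝ) ≤ t^2 := sq_nonneg t
  have hp2 : (t^2)^2 ≤ (1/4:ℝ)^2 := pow_le_pow_left₀ hu0 hu 2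
  have hp3 : (t^2)^3 ≤ (1/4:ℝ)^3 := pow_le_pow_left₀ hu0 hu 3
  have hp4 : (t^2)^4 ≤ (1/4:ℝ)^4 := pow_le_pow_left₀ hu0 hu 4
  have hp5 : (t^2)^5 ≤ (1/4:ℝ)^5 := pow_le_pow_left₀ hu0 hu 5
  have hp6 : (t^2)^6 ≤ (1/4:ℝ)^6 := pow_le_pow_left₀ hu0 hu 6
  have hp7 : (t^2)^7 ≤ (1/4:ℝ)^7 := pow_le_pow_left₀ hu0 hu 7
  have hp8 : (t^2)^8 ≤ (1/4:ℝ)^8 := pow_le_pow_left₀ hu0 hu 8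
  have hp9 : (t^2)^9 ≤ (1/4:ℝ)^9 := pow_le_pow_left₀ hu0 hu 9
  have hp10 : (t^2)^10 ≤ (1/4:ℝ)^10 := pow_le_pow_left₀ hu0 hu 10
  have hq2 : (0:ℝ) ≤ (t^2)^2 := pow_nonneg hu0 2
  have hq3 : (0:ℝ) ≤ (t^2)^3 := pow_nonneg hu0 3
  have hq4 : (0:ℝ) ≤ (t^2)^4 := pow_nonneg hu0 4
  have hq5 : (0:ℝ) ≤ (t^2)^5 := pow_nonneg hu0 5
  have hq6 : (0:ℝ) ≤ (t^2)^6 := pow_nonneg hu0 6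
  have hq7 : (0:ℝ) ≤ (t^2)^7 := pow_nonneg hu0 7
  have hq8 : (0:ℝ) ≤ (t^2)^8 := pow_nonneg hu0 8
  have hq9 : (0:ℝ) ≤ (t^2)^9 := pow_nonneg hu0 9
  have hq10 : (0:ℝ) ≤ (t^2)^10 := pow_nonneg hu0 10
  have hsl0 : 0 ≤ t - t^3/6 + t^5/120 - t^7/5040 := by
    nlinarith [mul_nonneg (mul_nonneg ht.le hu0) hu0]
  have hcl0 : 0 ≤ 1 - t^2/2 + t^4/24 - t^6/720 := by nlinarith
  have hsh0 : (0:ℝ) ≤ t - t^3/6 + t^5/120 := by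
    nlinarith [mul_nonneg (mul_nonneg ht.le hu0) hu0]
  have hch0 : (0:ℝ) ≤ 1 - t^2/2 + t^4/24 := le_trans hc.le hch
  have hMLO : (0:ℝ) ≤ (17/45) - (116/315)*t^2 + (42443/302400)*t^4 - (4427/151200)*t^6 + (2803/725760)*t^8 - (89/259200)*t^10 + (7/331776)*t^12 - (167/186624000)*t^14 + (19/746496000)*t^16 - (1/2239488000)*t^18 + (1/268738560000)*t^20 := by linarith
  have hMHI : (0:ℝ) ≤ (17/45) - (149/420)*t^2 + (5449/43200)*t^4 - (10247/453600)*t^6 + (1711/793800)*t^8 - (37693/381024000)*t^10 + (3439/3657830400)*t^12 + (31/457228800)*t^14 - (421/274337280000)*t^16 + (1/45722880000)*t^18 - (1/6584094720000)*t^20 := by linarith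
  have hσhi : (0:ℝ) < 1 - t^2/6 + t^4/120 := by nlinarith
  have hσlo : (0:ℝ) < 1 - t^2/6 + t^4/120 - t^6/5040 := by nlinarith
  have hclpos : (0:ℝ) < 1 - t^2/2 + t^4/24 - t^6/720 := by nlinarith
  -- numerator bounds
  have b1 : t*((t - t^3/6 + t^5/120 - t^7/5040)*(1 - t^2/2 + t^4/24 - t^6/720)) ≤ t*(s*c) :=
    mul_le_mul_of_nonneg_left (mul_le_mul hsl hcl hcl0 hs.le) ht.le
  have b1' : t*(s*c) ≤ t*((t - t^3/6 + t^5/120)*(1 - t^2/2 + t^4/24)) :=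
    mul_le_mul_of_nonneg_left (mul_le_mul hsh hch hc.le hsh0) ht.le
  have b2 : t^2*(1 - t^2/2 + t^4/24 - t^6/720)^4 ≤ t^2*c^4 :=
    mul_le_mul_of_nonneg_left (pow_le_pow_left₀ hcl0 hcl 4) (by positivity)
  have b2' : t^2*c^4 ≤ t^2*(1 - t^2/2 + t^4/24)^4 :=
    mul_le_mul_of_nonneg_left (pow_le_pow_left₀ hc.le hch 4) (by positivity)
  have b3 : s^2*c^2 ≤ (t - t^3/6 + t^5/120)^2*(1 - t^2/2 + t^4/24)^2 :=
    mul_le_mul (pow_le_pow_left₀ hs.le hsh 2) (pow_le_pow_left₀ hc.le hch 2)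
      (pow_nonneg hc.le 2) (pow_nonneg hsh0 2)
  have b3' : (t - t^3/6 + t^5/120 - t^7/5040)^2*(1 - t^2/2 + t^4/24 - t^6/720)^2 ≤ s^2*c^2 :=
    mul_le_mul (pow_le_pow_left₀ hsl0 hsl 2) (pow_le_pow_left₀ hcl0 hcl 2)
      (pow_nonneg hcl0 2) (pow_nonneg hs.le 2)
  have hNlo : t^6*((17/45) - (116/315)*t^2 + (42443/302400)*t^4 - (4427/151200)*t^6 + (2803/725760)*t^8 - (89/259200)*t^10 + (7/331776)*t^12 - (167/186624000)*t^14 + (19/746496000)*t^16 - (1/2239488000)*t^18 + (1/268738560000)*t^20) ≤ Gnum x := by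
    have hg : Gnum x = t*(s*c) + t^2*c^4 - 2*(s^2*c^2) := by
      unfold Gnum; rw [← htdef, ← hsdef, ← hcdef]; ring
    rw [hg]; linarith
  have hNhi : Gnum x ≤ t^6*((17/45) - (149/420)*t^2 + (5449/43200)*t^4 - (10247/453600)*t^6 + (1711/793800)*t^8 - (37693/381024000)*t^10 + (3439/3657830400)*t^12 + (31/457228800)*t^14 - (421/274337280000)*t^16 + (1/45722880000)*t^18 - (1/6584094720000)*t^20) := by
    have hg : Gnum x = t*(s*c) + t^2*c^4 - 2*(s^2*c^2) := by
      unfold Gnum; rw [← htdef, ← hsdef, ← hcdef]; ring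
    rw [hg]; linarith
  -- denominator bounds
  have hdg : Gden x = 16*t^3*(s^3*c^3) := by
    unfold Gden; rw [← htdef, ← hsdef, ← hcdef]; ring
  have hden_hi : Gden x ≤ t^6*(16*(1 - t^2/6 + t^4/120)^3) := by
    have d1 : s^3*c^3 ≤ (t - t^3/6 + t^5/120)^3 := by
      have e1 : s^3*c^3 ≤ s^3*1 := by
        apply mul_le_mul_of_nonneg_left _ (pow_nonneg hs.le 3)
        calc c^3 ≤ 1^3 := pow_le_pow_left₀ hc.le hc1 3
        _ = 1 := one_pow 3
      have e2 : s^3 ≤ (t - t^3/6 + t^5/120)^3 := pow_le_pow_left₀ hs.le hsh 3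
      calc s^3*c^3 ≤ s^3*1 := e1
      _ = s^3 := mul_one _
      _ ≤ _ := e2
    have := mul_le_mul_of_nonneg_left d1 (by positivity : (0:ℝ) ≤ 16*t^3)
    rw [hdg]
    linarith [this]
  have hden_lo : t^6*(16*(1 - t^2/6 + t^4/120 - t^6/5040)^3*(1 - t^2/2 + t^4/24 - t^6/720)^3)
      ≤ Gden x := by
    have d1 : (t - t^3/6 + t^5/120 - t^7/5040)^3*(1 - t^2/2 + t^4/24 - t^6/720)^3 ≤ s^3*c^3 :=
      mul_le_mul (pow_le_pow_left₀ hsl0 hsl 3) (pow_le_pow_left₀ hcl0 hcl 3)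
        (pow_nonneg hcl0 3) (pow_nonneg hs.le 3)
    have := mul_le_mul_of_nonneg_left d1 (by positivity : (0:ℝ) ≤ 16*t^3)
    rw [hdg]
    linarith [this]
  have hden_lo_pos : (0:ℝ) < t^6*(16*(1 - t^2/6 + t^4/120 - t^6/5040)^3
      *(1 - t^2/2 + t^4/24 - t^6/720)^3) := by positivity
  have ht6 : (0:ℝ) < t^6 := by positivity
  constructor
  · calc lowf x = (t^6*((17/45) - (116/315)*t^2 + (42443/302400)*t^4 - (4427/151200)*t^6 + (2803/725760)*t^8 - (89/259200)*t^10 + (7/331776)*t^12 - (167/186624000)*t^14 + (19/746496000)*t^16 - (1/2239488000)*t^18 + (1/268738560000)*t^20))/(t^6*(16*(1 - t^2/6 + t^4/120)^3)) := by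
          unfold lowf
          rw [← htdef, mul_div_mul_left _ _ (by positivity : (t:ℝ)^6 ≠ 0)]
      _ ≤ (t^6*((17/45) - (116/315)*t^2 + (42443/302400)*t^4 - (4427/151200)*t^6 + (2803/725760)*t^8 - (89/259200)*t^10 + (7/331776)*t^12 - (167/186624000)*t^14 + (19/746496000)*t^16 - (1/2239488000)*t^18 + (1/268738560000)*t^20))/(Gden x) :=
          div_le_div_of_nonneg_left (mul_nonneg ht6.le hMLO) hgden hden_hi
      _ ≤ Gnum x / Gden x := (div_le_div_iff_of_pos_right hgden).mpr hNlo
  · calc Gnum x / Gden x ≤ (t^6*((17/45) - (149/420)*t^2 + (5449/43200)*t^4 - (10247/453600)*t^6 + (1711/793800)*t^8 - (37693/381024000)*t^10 + (3439/3657830400)*t^12 + (31/457228800)*t^14 - (421/274337280000)*t^16 + (1/45722880000)*t^18 - (1/6584094720000)*t^20))/(Gden x) := (div_le_div_iff_of_pos_right hgden).mpr hNhi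
      _ ≤ (t^6*((17/45) - (149/420)*t^2 + (5449/43200)*t^4 - (10247/453600)*t^6 + (1711/793800)*t^8 - (37693/381024000)*t^10 + (3439/3657830400)*t^12 + (31/457228800)*t^14 - (421/274337280000)*t^16 + (1/45722880000)*t^18 - (1/6584094720000)*t^20))/(t^6*(16*(1 - t^2/6 + t^4/120 - t^6/5040)^3
            *(1 - t^2/2 + t^4/24 - t^6/720)^3)) :=
          div_le_div_of_nonneg_left (mul_nonneg ht6.le hMHI) hden_lo_pos hden_lo
      _ = highf x := by
          unfold highf
          rw [← htdef, mul_div_mul_left _ _ (by positivity : (t:ℝ)^6 ≠ 0)]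

lemma lowf_tendsto : Tendsto lowf (nhdsWithin 0 (Set.Ioi 0)) (nhds (17/720)) := by
  have hc : ContinuousAt lowf 0 := by
    unfold lowf
    apply ContinuousAt.div (by fun_prop) (by fun_prop)
    norm_num
  have hval : lowf 0 = 17/720 := by unfold lowf; norm_num
  rw [show (17/720 : ℝ) = lowf 0 from hval.symm]
  exact hc.tendsto.mono_left nhdsWithin_le_nhds

lemma highf_tendsto : Tendsto highf (nhdsWithin 0 (Set.Ioi 0)) (nhds (17/720)) := by
  have hc : ContinuousAt highf 0 := by
    unfold highf
    apply ContinuousAt.div (by fun_prop) (by fun_prop)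
    norm_num
  have hval : highf 0 = 17/720 := by unfold highf; norm_num
  rw [show (17/720 : ℝ) = highf 0 from hval.symm]
  exact hc.tendsto.mono_left nhdsWithin_le_nhds

lemma wg_lim_zero : Tendsto wg (nhdsWithin 0 (Set.Ioi 0)) (nhds (17/720)) := by
  have hmem : Set.Ioo (0:ℝ) 1 ∈ nhdsWithin (0:ℝ) (Set.Ioi 0) :=
    Ioo_mem_nhdsGT (by norm_num)
  refine tendsto_of_tendsto_of_tendsto_of_le_of_le' lowf_tendsto highf_tendsto ?_ ?_
  · filter_upwards [hmem] with x hx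
    exact (wg_squeeze hx.1 hx.2).1
  · filter_upwards [hmem] with x hx
    exact (wg_squeeze hx.1 hx.2).2

lemma wg_lim_pi : Tendsto wg (nhdsWithin (π/2) (Set.Iio (π/2)))
    (nhds ((π ^ 2 + 8 * π - 32) / (2 * π ^ 3))) := by
  have hpi := Real.pi_pos
  have htan : ContinuousAt (fun x : ℝ => Real.tan (x/2)) (π/2) := by
    have h1 : ContinuousAt Real.tan ((π/2)/2) :=
      Real.continuousAt_tan.mpr (by
        rw [show (π/2)/2 = π/4 by ring, Real.cos_pi_div_four]; positivity)
    have h2 : ContinuousAt (fun x : ℝ => x/2) (π/2) := continuousAt_id.div_const 2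
    exact ContinuousAt.comp (x := π/2) (f := fun x : ℝ => x/2) (g := Real.tan) h1 h2
  have htanne : Real.tan ((π/2)/2) ≠ 0 := by
    rw [show (π/2)/2 = π/4 by ring, Real.tan_pi_div_four]; norm_num
  have hsinne : Real.sin (π/2) ≠ 0 := by rw [Real.sin_pi_div_two]; norm_num
  have hc : ContinuousAt wg (π/2) := by
    unfold wg
    apply ContinuousAt.div
    · refine ContinuousAt.sub (ContinuousAt.add ?_ ?_) continuousAt_const
      · exact ContinuousAt.div continuousAt_id Real.continuous_sin.continuousAt hsinne
      · exact (((continuousAt_id).div_const 2).div htan htanne).pow 2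
    · exact ((continuousAt_id).pow 3).mul Real.continuous_sin.continuousAt
    · rw [Real.sin_pi_div_two]
      positivity
  have hval : wg (π/2) = (π ^ 2 + 8 * π - 32) / (2 * π ^ 3) := by
    unfold wg
    rw [Real.sin_pi_div_two, show (π/2)/2 = π/4 by ring, Real.tan_pi_div_four]
    rw [div_eq_div_iff (by positivity) (by positivity)]
    ring
  rw [show ((π ^ 2 + 8 * π - 32) / (2 * π ^ 3) : ℝ) = wg (π/2) from hval.symm]
  exact hc.tendsto.mono_left nhdsWithin_le_nhds


theorem wilker_ratio_monotone :
    MonotoneOn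
      (fun x : ℝ =>
        (x / Real.sin x + ((x / 2) / Real.tan (x / 2)) ^ 2 - 2) / (x ^ 3 * Real.sin x))
      (Set.Ioo 0 (π / 2)) ∧
    Tendsto
      (fun x : ℝ =>
        (x / Real.sin x + ((x / 2) / Real.tan (x / 2)) ^ 2 - 2) / (x ^ 3 * Real.sin x))
      (nhdsWithin 0 (Set.Ioi 0)) (nhds (17 / 720)) ∧
    Tendsto
      (fun x : ℝ =>
        (x / Real.sin x + ((x / 2) / Real.tan (x / 2)) ^ 2 - 2) / (x ^ 3 * Real.sin x))
      (nhdsWithin (π / 2) (Set.Iio (π / 2))) (nhds ((π ^ 2 + 8 * π - 32) / (2 * π ^ 3))) :=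
  ⟨wg_monotone, wg_lim_zero, wg_lim_pi⟩
end
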